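/- arXiv:2402.03381 — 2 statements merged into one kernel-verified Lean document; each statement's English description precedes it below -/
import Mathlib

section
/- Interlacing lemma: Let p_n(x) = a(x-x_1)⋯(x-x_n) and q_n(x) = b(x-y_1)⋯(x-y_n) be real polynomials with a, b > 0 and strictly interlacing real zeros y_1 < x_1 < y_2 < x_2 < ⋯ < y_n < x_n. Then for any real c > 0, the polynomial f_n(x) = p_n(x) + c q_n(x) has n real simple zeros η_1 < ⋯ < η_n satisfying y_k < η_k < x_k for each k = 1, …, n. -/
open Polynomial

theorem interlacing_lemma (n : ℕ) (a b c : ℝ) (ha : 0 < a) (hb : 0 < b) (hc : 0 < c)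
    (x y : Fin n → ℝ) (hx : StrictMono x) (hy : StrictMono y)
    (hyx : ∀ i, y i < x i)
    (hxy : ∀ i : Fin n, ∀ h : (i : ℕ) + 1 < n, x i < y ⟨(i : ℕ) + 1, h⟩) :
    ∃ η : Fin n → ℝ, StrictMono η ∧ (∀ i, y i < η i ∧ η i < x i) ∧
      (C a * ∏ i, (X - C (x i))) + Polynomial.C c * (C b * ∏ i, (X - C (y i))) =
        C (a + c * b) * ∏ i, (X - C (η i)) := by
  rcases Nat.eq_zero_or_pos n with hn | hn
  · subst hn
    refine ⟨x, fun i j _ => i.elim0, fun i => i.elim0, ?_⟩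
    simp only [Finset.univ_eq_empty, Finset.prod_empty, mul_one, ← C_mul, ← C_add]
  set f : ℝ[X] := (C a * ∏ i, (X - C (x i))) + C c * (C b * ∏ i, (X - C (y i))) with hf
  -- auxiliary ordering fact
  have hxylt : ∀ i k : Fin n, i < k → x i < y k := by
    intro i k hik
    have h1 : (i : ℕ) + 1 < n := lt_of_le_of_lt (Nat.succ_le_of_lt hik) k.isLt
    have h2 : (⟨(i : ℕ) + 1, h1⟩ : Fin n) ≤ k := Nat.succ_le_of_lt hik
    exact lt_of_lt_of_le (hxy i h1) (hy.monotone h2)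
  have key : ∀ k : Fin n, ∃ t, y k < t ∧ t < x k ∧ f.eval t = 0 := by
    intro k
    have h1 : f.eval (y k) = a * ∏ i, (y k - x i) := by
      have hz : (∏ i, (y k - y i) : ℝ) = 0 :=
        Finset.prod_eq_zero (Finset.mem_univ k) (by ring)
      simp [hf, eval_prod, hz]
    have h2 : f.eval (x k) = c * (b * ∏ i, (x k - y i)) := by
      have hz : (∏ i, (x k - x i) : ℝ) = 0 :=
        Finset.prod_eq_zero (Finset.mem_univ k) (by ring)
      simp [hf, eval_prod, hz]
    have hneg : (∏ i, ((y k - x i) * (x k - y i)) : ℝ) < 0 := by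
      rw [← Finset.prod_erase_mul _ _ (Finset.mem_univ k)]
      apply mul_neg_of_pos_of_neg
      · apply Finset.prod_pos
        intro i hi
        have hik : i ≠ k := (Finset.mem_erase.mp hi).1
        rcases lt_or_gt_of_ne hik with h | h
        · have ha1 : x i < y k := hxylt i k h
          have ha2 : y i < x k := lt_trans (hy h) (hyx k)
          nlinarith
        · have ha1 : y k < x i := lt_trans (hyx k) (hx h)
          have ha2 : x k < y i := hxylt k i h
          nlinarith
      · have := hyx k; nlinarith
    have hpp : (∏ i, (y k - x i) : ℝ) * (∏ i, (x k - y i)) =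
        ∏ i, ((y k - x i) * (x k - y i)) := Finset.prod_mul_distrib.symm
    have hmul : f.eval (y k) * f.eval (x k) < 0 := by
      rw [h1, h2]
      nlinarith [hneg, hpp, mul_pos (mul_pos ha hc) hb]
    have hcont : ContinuousOn (fun t => f.eval t) (Set.Icc (y k) (x k)) :=
      (Polynomial.continuous f).continuousOn
    have hle : y k ≤ x k := le_of_lt (hyx k)
    rcases mul_neg_iff.mp hmul with ⟨hp, hq⟩ | ⟨hp, hq⟩
    · have h0 : (0 : ℝ) ∈ Set.Ioo (f.eval (x k)) (f.eval (y k)) := ⟨hq, hp⟩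
      obtain ⟨t, ht, hft⟩ := intermediate_value_Ioo' hle hcont h0
      exact ⟨t, ht.1, ht.2, hft⟩
    · have h0 : (0 : ℝ) ∈ Set.Ioo (f.eval (y k)) (f.eval (x k)) := ⟨hp, hq⟩
      obtain ⟨t, ht, hft⟩ := intermediate_value_Ioo hle hcont h0
      exact ⟨t, ht.1, ht.2, hft⟩
  set η : Fin n → ℝ := fun k => (key k).choose with hηdef
  have hη1 : ∀ k, y k < η k := fun k => (key k).choose_spec.1
  have hη2 : ∀ k, η k < x k := fun k => (key k).choose_spec.2.1
  have hη3 : ∀ k, f.eval (η k) = 0 := fun k => (key k).choose_spec.2.2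
  have hmono : StrictMono η := by
    intro i j hij
    calc η i < x i := hη2 i
    _ < y j := hxylt i j hij
    _ < η j := hη1 j
  refine ⟨η, hmono, fun i => ⟨hη1 i, hη2 i⟩, ?_⟩
  set g : ℝ[X] := f - C (a + c * b) * ∏ i, (X - C (η i)) with hg
  have hgeval : ∀ k : Fin n, g.eval (η k) = 0 := by
    intro k
    have hz : (∏ i, (η k - η i) : ℝ) = 0 :=
      Finset.prod_eq_zero (Finset.mem_univ k) (by ring)
    simp [hg, eval_prod, hz, hη3 k]
  have hdeg : ∀ r s : Fin n → ℝ,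
      degree ((∏ i, (X - C (r i))) - ∏ i, (X - C (s i)) : ℝ[X]) < (n : ℕ) := by
    intro r s
    have h1 : (∏ i, (X - C (r i)) : ℝ[X]).Monic :=
      monic_prod_of_monic _ _ (fun i _ => monic_X_sub_C _)
    have h2 : (∏ i, (X - C (s i)) : ℝ[X]).Monic :=
      monic_prod_of_monic _ _ (fun i _ => monic_X_sub_C _)
    have hD1 : (∏ i, (X - C (r i)) : ℝ[X]).degree = (n : ℕ) := by
      rw [degree_eq_natDegree h1.ne_zero,
        natDegree_prod _ _ (fun i _ => X_sub_C_ne_zero (r i))]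
      simp
    have hD2 : (∏ i, (X - C (s i)) : ℝ[X]).degree = (n : ℕ) := by
      rw [degree_eq_natDegree h2.ne_zero,
        natDegree_prod _ _ (fun i _ => X_sub_C_ne_zero (s i))]
      simp
    by_cases heq : (∏ i, (X - C (r i)) : ℝ[X]) = ∏ i, (X - C (s i))
    · rw [heq, sub_self, degree_zero]
      exact bot_lt_iff_ne_bot.mpr (by simp)
    · calc degree ((∏ i, (X - C (r i))) - ∏ i, (X - C (s i)) : ℝ[X])
          < (∏ i, (X - C (r i)) : ℝ[X]).degree :=
            degree_sub_lt (by rw [hD1, hD2]) h1.ne_zero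
              (by rw [h1.leadingCoeff, h2.leadingCoeff])
      _ = (n : ℕ) := hD1
  have hgrw : g = C a * ((∏ i, (X - C (x i))) - ∏ i, (X - C (η i)))
      + C (c * b) * ((∏ i, (X - C (y i))) - ∏ i, (X - C (η i))) := by
    rw [hg, hf]
    simp only [C_add, C_mul]
    ring
  have hgdeg : g.degree < (n : ℕ) := by
    rw [hgrw]
    apply lt_of_le_of_lt (degree_add_le _ _)
    apply max_lt
    · rw [degree_C_mul (ne_of_gt ha)]; exact hdeg x η
    · rw [degree_C_mul (ne_of_gt (mul_pos hc hb))]; exact hdeg y η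
  have hg0 : g = 0 := by
    by_cases hz : g = 0
    · exact hz
    · refine Polynomial.eq_zero_of_natDegree_lt_card_of_eval_eq_zero g hmono.injective hgeval ?_
      rw [Fintype.card_fin]
      exact (natDegree_lt_iff_degree_lt hz).mpr hgdeg
  have := sub_eq_zero.mp hg0
  rw [hf] at this
  exact this
end

section
/- In the setting of the interlacing lemma, each zero η_k(c) of f_n(x) = p_n(x) + c q_n(x) is a strictly decreasing function of c > 0, and lim_{c→∞} η_k(c) = y_k for each k = 1, …, n. -/
open Polynomial Filter

private lemma expr_eq {n : ℕ} (z : Fin n → ℝ) (S : Finset (Fin n)) (t : ℝ) :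
    (-1 : ℝ) ^ S.card * ∏ j, (t - z j) =
      (∏ j ∈ S, (z j - t)) * ∏ j ∈ Sᶜ, (t - z j) := by
  rw [← Finset.prod_mul_prod_compl S (fun j => t - z j)]
  have h1 : ∏ j ∈ S, (t - z j) = (-1 : ℝ) ^ S.card * ∏ j ∈ S, (z j - t) := by
    calc ∏ j ∈ S, (t - z j) = ∏ j ∈ S, (-1) * (z j - t) :=
          Finset.prod_congr rfl (by intros; ring)
      _ = (∏ _j ∈ S, (-1 : ℝ)) * ∏ j ∈ S, (z j - t) := Finset.prod_mul_distrib
      _ = (-1 : ℝ) ^ S.card * ∏ j ∈ S, (z j - t) := by rw [Finset.prod_const]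
  rw [h1, ← mul_assoc, ← mul_assoc, ← pow_add]
  have he : Even (S.card + S.card) := ⟨S.card, rfl⟩
  rw [he.neg_one_pow, one_mul]

private lemma prodSignPos {n : ℕ} (z : Fin n → ℝ) (S : Finset (Fin n)) (t : ℝ)
    (h2 : ∀ j ∈ S, t < z j) (h1 : ∀ j ∉ S, z j < t) :
    0 < (-1 : ℝ) ^ S.card * ∏ j, (t - z j) := by
  rw [expr_eq]
  exact mul_pos (Finset.prod_pos fun j hj => sub_pos.2 (h2 j hj))
    (Finset.prod_pos fun j hj => sub_pos.2 (h1 j (Finset.mem_compl.1 hj)))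

private lemma sign_nonneg {n : ℕ} (z : Fin n → ℝ) (S : Finset (Fin n)) (t : ℝ)
    (h2 : ∀ j ∈ S, t < z j) (h1 : ∀ j ∉ S, z j ≤ t) :
    0 ≤ (-1 : ℝ) ^ S.card * ∏ j, (t - z j) := by
  rw [expr_eq]
  exact mul_nonneg (Finset.prod_nonneg fun j hj => sub_nonneg.2 (h2 j hj).le)
    (Finset.prod_nonneg fun j hj => sub_nonneg.2 (h1 j (Finset.mem_compl.1 hj)))

private lemma sign_nonneg' {n : ℕ} (z : Fin n → ℝ) (S : Finset (Fin n)) (t : ℝ)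
    (h2 : ∀ j ∈ S, t ≤ z j) (h1 : ∀ j ∉ S, z j < t) :
    0 ≤ (-1 : ℝ) ^ S.card * ∏ j, (t - z j) := by
  rw [expr_eq]
  exact mul_nonneg (Finset.prod_nonneg fun j hj => sub_nonneg.2 (h2 j hj))
    (Finset.prod_nonneg fun j hj => sub_nonneg.2 (h1 j (Finset.mem_compl.1 hj)).le)

private lemma gap_lt {n : ℕ} {x y : Fin n → ℝ} (hy : StrictMono y)
    (hxy : ∀ i : Fin n, ∀ h : (i : ℕ) + 1 < n, x i < y ⟨(i : ℕ) + 1, h⟩)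
    {i j : Fin n} (hij : i < j) : x i < y j := by
  have hij' : (i : ℕ) < (j : ℕ) := hij
  have h1 : (i : ℕ) + 1 < n := Nat.lt_of_le_of_lt hij' j.isLt
  refine lt_of_lt_of_le (hxy i h1) (hy.monotone ?_)
  simp only [Fin.le_def]
  omega

theorem interlacing_lemma_asymptotics (n : ℕ) (a b : ℝ) (ha : 0 < a) (hb : 0 < b)
    (x y : Fin n → ℝ) (hx : StrictMono x) (hy : StrictMono y)
    (hyx : ∀ i, y i < x i)
    (hxy : ∀ i : Fin n, ∀ h : (i : ℕ) + 1 < n, x i < y ⟨(i : ℕ) + 1, h⟩)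
    (η : ℝ → Fin n → ℝ)
    (hη : ∀ c, 0 < c → StrictMono (η c) ∧ (∀ i, y i < η c i ∧ η c i < x i) ∧
      (C a * ∏ i, (X - C (x i))) + C c * (C b * ∏ i, (X - C (y i))) =
        C (a + c * b) * ∏ i, (X - C (η c i))) :
    ∀ i : Fin n, StrictAntiOn (fun c => η c i) (Set.Ioi (0 : ℝ)) ∧
      Tendsto (fun c => η c i) atTop (nhds (y i)) := by
  intro i
  set s : ℝ := (-1) ^ (Finset.Ioi i).card with hs
  -- a helper: evaluation of the polynomial identity at a point
  have heval : ∀ c : ℝ, 0 < c → ∀ t : ℝ,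
      a * ∏ j, (t - x j) + c * (b * ∏ j, (t - y j)) =
        (a + c * b) * ∏ j, (t - η c j) := by
    intro c hc t
    have E := congrArg (Polynomial.eval t) (hη c hc).2.2
    simpa only [eval_add, eval_mul, eval_prod, eval_sub, eval_X, eval_C] using E
  constructor
  · -- strict antitonicity
    intro c hc c' hc' hcc'
    simp only [Set.mem_Ioi] at hc hc'
    by_contra hcon
    push_neg at hcon
    -- hcon : η c i ≤ η c' i
    set t' := η c' i with ht'
    obtain ⟨hm, hin, -⟩ := hη c hc
    obtain ⟨hm', hin', -⟩ := hη c' hc'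
    have Ec := heval c hc t'
    have Ec' := heval c' hc' t'
    have hzero : ∏ j, (t' - η c' j) = 0 :=
      Finset.prod_eq_zero (Finset.mem_univ i) (by simp [ht'])
    rw [hzero, mul_zero] at Ec'
    have hyi : y i < t' := (hin' i).1
    have hxi : t' < x i := (hin' i).2
    have A : 0 < s * ∏ j, (t' - y j) := by
      refine prodSignPos y (Finset.Ioi i) t' ?_ ?_
      · intro j hj
        exact hxi.trans (gap_lt hy hxy (Finset.mem_Ioi.1 hj))
      · intro j hj
        have : j ≤ i := le_of_not_gt (fun h => hj (Finset.mem_Ioi.2 h))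
        exact lt_of_le_of_lt (hy.monotone this) hyi
    have B : 0 ≤ s * ∏ j, (t' - η c j) := by
      refine sign_nonneg (η c) (Finset.Ioi i) t' ?_ ?_
      · intro j hj
        have hij := Finset.mem_Ioi.1 hj
        exact hxi.trans ((gap_lt hy hxy hij).trans ((hη c hc).2.1 j).1)
      · intro j hj
        have : j ≤ i := le_of_not_gt (fun h => hj (Finset.mem_Ioi.2 h))
        exact le_trans (hm.monotone this) hcon
    have key : (c - c') * (b * ∏ j, (t' - y j)) = (a + c * b) * ∏ j, (t' - η c j) := by
      linear_combination Ec - Ec'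
    have key2 : (c - c') * (b * (s * ∏ j, (t' - y j))) =
        (a + c * b) * (s * ∏ j, (t' - η c j)) := by
      linear_combination s * key
    have hL : (c - c') * (b * (s * ∏ j, (t' - y j))) < 0 :=
      mul_neg_of_neg_of_pos (by linarith) (mul_pos hb A)
    have hR : 0 ≤ (a + c * b) * (s * ∏ j, (t' - η c j)) :=
      mul_nonneg (by nlinarith) B
    linarith
  · -- the limit
    rw [tendsto_order]
    constructor
    · intro m hm
      filter_upwards [eventually_gt_atTop (0 : ℝ)] with c hc
      exact hm.trans ((hη c hc).2.1 i).1
    · intro m hm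
      set m' := min m ((y i + x i) / 2) with hm'def
      have hym' : y i < m' := lt_min hm (by linarith [hyx i])
      have hm'x : m' < x i := lt_of_le_of_lt (min_le_right _ _) (by linarith [hyx i])
      have A' : 0 < s * ∏ j, (m' - y j) := by
        refine prodSignPos y (Finset.Ioi i) m' ?_ ?_
        · intro j hj
          exact hm'x.trans (gap_lt hy hxy (Finset.mem_Ioi.1 hj))
        · intro j hj
          have : j ≤ i := le_of_not_gt (fun h => hj (Finset.mem_Ioi.2 h))
          exact lt_of_le_of_lt (hy.monotone this) hym'
      set M : ℝ := |a * ∏ j, (m' - x j)| with hM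
      set c₀ : ℝ := (M + 1) / (b * (s * ∏ j, (m' - y j))) with hc₀
      have hby : 0 < b * (s * ∏ j, (m' - y j)) := mul_pos hb A'
      filter_upwards [eventually_ge_atTop c₀, eventually_gt_atTop (0 : ℝ)] with c hcc hc
      obtain ⟨hmono, hin, -⟩ := hη c hc
      by_contra hcon
      push_neg at hcon
      -- hcon : m ≤ η c i
      have hm'le : m' ≤ η c i := le_trans (min_le_left _ _) hcon
      have cardrel : (Finset.Ici i).card = (Finset.Ioi i).card + 1 := by
        rw [← Finset.Ioi_insert i, Finset.card_insert_of_notMem (by simp)]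
      have C0 : 0 ≤ (-1 : ℝ) ^ (Finset.Ici i).card * ∏ j, (m' - η c j) := by
        refine sign_nonneg' (η c) (Finset.Ici i) m' ?_ ?_
        · intro j hj
          exact le_trans hm'le (hmono.monotone (Finset.mem_Ici.1 hj))
        · intro j hj
          have hji : j < i := lt_of_not_ge (fun h => hj (Finset.mem_Ici.2 h))
          exact ((hin j).2.trans (gap_lt hy hxy hji)).trans hym'
      have hC : s * ∏ j, (m' - η c j) ≤ 0 := by
        rw [cardrel, pow_succ] at C0
        nlinarith [C0]
      have Ec := heval c hc m'
      have key2 : a * (s * ∏ j, (m' - x j)) + c * (b * (s * ∏ j, (m' - y j))) =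
          (a + c * b) * (s * ∏ j, (m' - η c j)) := by
        linear_combination s * Ec
      have hsx : -M ≤ a * (s * ∏ j, (m' - x j)) := by
        rcases Nat.even_or_odd (Finset.Ioi i).card with he | ho
        · have : s = 1 := he.neg_one_pow
          rw [this, one_mul]
          simpa [hM] using neg_abs_le (a * ∏ j, (m' - x j))
        · have : s = -1 := ho.neg_one_pow
          rw [this]
          have := le_abs_self (a * ∏ j, (m' - x j))
          rw [hM]; nlinarith
      have hcb : M + 1 ≤ c * (b * (s * ∏ j, (m' - y j))) := by
        have h1 : c₀ * (b * (s * ∏ j, (m' - y j))) = M + 1 :=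
          div_mul_cancel₀ _ (ne_of_gt hby)
        nlinarith [mul_le_mul_of_nonneg_right hcc hby.le]
      have hR : (a + c * b) * (s * ∏ j, (m' - η c j)) ≤ 0 :=
        mul_nonpos_of_nonneg_of_nonpos (by nlinarith) hC
      have : 0 ≤ M := abs_nonneg _
      linarith
end
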